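/- Let F and G be binary cluster families on the same finite set X (each is a finite family of nonempty subsets of X containing X and all singletons, any two members disjoint or nested, and every member with at least two elements the union of two disjoint nonempty members). Let U_P, V_P ∈ F be disjoint nonempty sets with U_P ∪ V_P = X, and let U_Q, V_Q ∈ G be disjoint nonempty sets with U_Q ∪ V_Q = X. Let abc be a conflict of (F, G), i.e., for some labeling {x, y, z} = {a, b, c} some member of exactly one of F, G contains x and y but not z. Then at least one of the following holds: (i) {a, b, c} is contained in no member of F other than X; (ii) {a, b, c} is contained in no member of G other than X; (iii) there is exactly one set Y among U_P ∩ U_Q, U_P ∩ V_Q, V_P ∩ U_Q, V_P ∩ V_Q with {a, b, c} ⊆ Y, and abc is a conflict of the restricted pair (F|Y, G|Y), where F|Y := {C ∩ Y : C ∈ F, C ∩ Y ≠ ∅} and G|Y := {C ∩ Y : C ∈ G, C ∩ Y ≠ ∅}. -/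

import Mathlib

/-- A binary cluster family on ground set `X`: the family of clusters (leaf sets of
subtrees) of a rooted binary phylogenetic tree with leaf set `X`. -/
def IsBinaryClusterFamily {α : Type*} [DecidableEq α]
    (X : Finset α) (F : Finset (Finset α)) : Prop :=
  (∀ C ∈ F, C.Nonempty ∧ C ⊆ X) ∧
  X ∈ F ∧
  (∀ x ∈ X, ({x} : Finset α) ∈ F) ∧
  (∀ C ∈ F, ∀ D ∈ F, Disjoint C D ∨ C ⊆ D ∨ D ⊆ C) ∧
  (∀ C ∈ F, 2 ≤ C.card →
    ∃ C₁ ∈ F, ∃ C₂ ∈ F, C₁.Nonempty ∧ C₂.Nonempty ∧ Disjoint C₁ C₂ ∧ C = C₁ ∪ C₂)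

/-- The triple `xyz` is `xy`-biased in `F` (written `xy|_F z`): some member of `F`
contains `x` and `y` but not `z`. -/
def Biased {α : Type*} [DecidableEq α] (F : Finset (Finset α)) (x y z : α) : Prop :=
  ∃ C ∈ F, x ∈ C ∧ y ∈ C ∧ z ∉ C

/-- The triple `abc` is a conflict of `(F, G)`: for some labeling `{x,y,z} = {a,b,c}`,
the triple is `xy`-biased in exactly one of `F` and `G`. -/
def Conflict {α : Type*} [DecidableEq α] (F G : Finset (Finset α)) (a b c : α) : Prop :=
  ∃ x y z : α, ({x, y, z} : Finset α) = {a, b, c} ∧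
    Xor' (Biased F x y z) (Biased G x y z)

/-- The restriction `F|Y = {C ∩ Y : C ∈ F, C ∩ Y ≠ ∅}` of a cluster family to a
leaf subset `Y` (the cluster family of the induced subtree). -/
def Restrict {α : Type*} [DecidableEq α] (F : Finset (Finset α)) (Y : Finset α) :
    Finset (Finset α) :=
  (F.image (· ∩ Y)).filter Finset.Nonempty

lemma biased_restrict_iff {α : Type*} [DecidableEq α] (F : Finset (Finset α)) (Y : Finset α)
    {x y z : α} (hx : x ∈ Y) (hy : y ∈ Y) (hz : z ∈ Y) :
    Biased (Restrict F Y) x y z ↔ Biased F x y z := by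
  constructor
  · rintro ⟨E, hE, hxE, hyE, hzE⟩
    rw [Restrict, Finset.mem_filter, Finset.mem_image] at hE
    obtain ⟨⟨C, hC, rfl⟩, _⟩ := hE
    exact ⟨C, hC, (Finset.mem_inter.mp hxE).1, (Finset.mem_inter.mp hyE).1,
      fun h => hzE (Finset.mem_inter.mpr ⟨h, hz⟩)⟩
  · rintro ⟨C, hC, hxC, hyC, hzC⟩
    refine ⟨C ∩ Y, ?_, Finset.mem_inter.mpr ⟨hxC, hx⟩, Finset.mem_inter.mpr ⟨hyC, hy⟩,
      fun h => hzC (Finset.mem_inter.mp h).1⟩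
    rw [Restrict, Finset.mem_filter, Finset.mem_image]
    exact ⟨⟨C, hC, rfl⟩, ⟨x, Finset.mem_inter.mpr ⟨hxC, hx⟩⟩⟩

lemma conflict_restrict {α : Type*} [DecidableEq α] {F G : Finset (Finset α)} {Y : Finset α}
    {a b c : α} (h : Conflict F G a b c) (hsub : ({a, b, c} : Finset α) ⊆ Y) :
    Conflict (Restrict F Y) (Restrict G Y) a b c := by
  obtain ⟨x, y, z, hxyz, hxor⟩ := h
  have hx : x ∈ Y := hsub (hxyz ▸ Finset.mem_insert_self x {y, z})
  have hy : y ∈ Y := hsub (hxyz ▸ (by simp : y ∈ ({x, y, z} : Finset α)))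
  have hz : z ∈ Y := hsub (hxyz ▸ (by simp : z ∈ ({x, y, z} : Finset α)))
  refine ⟨x, y, z, hxyz, ?_⟩
  have h1 := biased_restrict_iff F Y hx hy hz
  have h2 := biased_restrict_iff G Y hx hy hz
  unfold Xor' at hxor ⊢
  rw [h1, h2]; exact hxor

lemma cluster_sub_half {α : Type*} [DecidableEq α]
    {X : Finset α} {F : Finset (Finset α)} (hF : IsBinaryClusterFamily X F)
    {UP VP : Finset α} (hUP : UP ∈ F) (hVP : VP ∈ F) (hPu : UP ∪ VP = X)
    {C : Finset α} (hC : C ∈ F) (hCX : C ≠ X) : C ⊆ UP ∨ C ⊆ VP := by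
  obtain ⟨hCn, hCsub⟩ := hF.1 C hC
  have lam := hF.2.2.2.1
  have hmem : ∀ x ∈ C, x ∈ UP ∨ x ∈ VP := by
    intro x hx
    have := hCsub hx
    rw [← hPu, Finset.mem_union] at this
    exact this
  rcases lam C hC UP hUP with h1 | h1 | h1
  · rcases lam C hC VP hVP with h2 | h2 | h2
    · exfalso
      obtain ⟨x, hx⟩ := hCn
      rcases hmem x hx with h | h
      · exact Finset.disjoint_left.mp h1 hx h
      · exact Finset.disjoint_left.mp h2 hx h
    · exact Or.inr h2
    · right
      intro x hx
      rcases hmem x hx with h | h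
      · exact absurd h (Finset.disjoint_left.mp h1 hx)
      · exact h
  · exact Or.inl h1
  · rcases lam C hC VP hVP with h2 | h2 | h2
    · left
      intro x hx
      rcases hmem x hx with h | h
      · exact h
      · exact absurd h (Finset.disjoint_left.mp h2 hx)
    · exact Or.inr h2
    · exfalso
      apply hCX
      apply Finset.Subset.antisymm hCsub
      rw [← hPu]
      exact Finset.union_subset h1 h2

theorem conflict_touches_root_or_recurses {α : Type*} [DecidableEq α]
    (X : Finset α) (F G : Finset (Finset α))
    (hF : IsBinaryClusterFamily X F) (hG : IsBinaryClusterFamily X G)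
    (UP VP : Finset α) (hUP : UP ∈ F) (hVP : VP ∈ F)
    (hUPn : UP.Nonempty) (hVPn : VP.Nonempty) (hPd : Disjoint UP VP) (hPu : UP ∪ VP = X)
    (UQ VQ : Finset α) (hUQ : UQ ∈ G) (hVQ : VQ ∈ G)
    (hUQn : UQ.Nonempty) (hVQn : VQ.Nonempty) (hQd : Disjoint UQ VQ) (hQu : UQ ∪ VQ = X)
    (a b c : α) (hab : a ≠ b) (hac : a ≠ c) (hbc : b ≠ c)
    (hconf : Conflict F G a b c) :
    (∀ C ∈ F, C ≠ X → ¬ (({a, b, c} : Finset α) ⊆ C)) ∨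
    (∀ D ∈ G, D ≠ X → ¬ (({a, b, c} : Finset α) ⊆ D)) ∨
    (∃ Y ∈ ({UP ∩ UQ, UP ∩ VQ, VP ∩ UQ, VP ∩ VQ} : Finset (Finset α)),
      ({a, b, c} : Finset α) ⊆ Y ∧
      (∀ Y' ∈ ({UP ∩ UQ, UP ∩ VQ, VP ∩ UQ, VP ∩ VQ} : Finset (Finset α)),
        ({a, b, c} : Finset α) ⊆ Y' → Y' = Y) ∧
      Conflict (Restrict F Y) (Restrict G Y) a b c) := by
  by_cases h1 : ∀ C ∈ F, C ≠ X → ¬ (({a, b, c} : Finset α) ⊆ C)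
  · exact Or.inl h1
  by_cases h2 : ∀ D ∈ G, D ≠ X → ¬ (({a, b, c} : Finset α) ⊆ D)
  · exact Or.inr (Or.inl h2)
  push_neg at h1 h2
  obtain ⟨C, hC, hCX, hCsub⟩ := h1
  obtain ⟨D, hD, hDX, hDsub⟩ := h2
  refine Or.inr (Or.inr ?_)
  have hCP := cluster_sub_half hF hUP hVP hPu hC hCX
  have hDQ := cluster_sub_half hG hUQ hVQ hQu hD hDX
  have huniq : ∀ Y ∈ ({UP ∩ UQ, UP ∩ VQ, VP ∩ UQ, VP ∩ VQ} : Finset (Finset α)),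
      a ∈ Y → ∀ Y' ∈ ({UP ∩ UQ, UP ∩ VQ, VP ∩ UQ, VP ∩ VQ} : Finset (Finset α)),
      a ∈ Y' → Y' = Y := by
    intro Y hY haY Y' hY' haY'
    simp only [Finset.mem_insert, Finset.mem_singleton] at hY hY'
    rcases hY with rfl | rfl | rfl | rfl <;> rcases hY' with rfl | rfl | rfl | rfl <;>
      simp only [Finset.mem_inter] at haY haY' <;>
      first
      | rfl
      | exact absurd haY'.1 (Finset.disjoint_left.mp hPd haY.1)
      | exact absurd haY.1 (Finset.disjoint_left.mp hPd haY'.1)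
      | exact absurd haY'.2 (Finset.disjoint_left.mp hQd haY.2)
      | exact absurd haY.2 (Finset.disjoint_left.mp hQd haY'.2)
  have key : ∀ Y ∈ ({UP ∩ UQ, UP ∩ VQ, VP ∩ UQ, VP ∩ VQ} : Finset (Finset α)),
      ({a, b, c} : Finset α) ⊆ Y →
      (∃ Y₀ ∈ ({UP ∩ UQ, UP ∩ VQ, VP ∩ UQ, VP ∩ VQ} : Finset (Finset α)),
        ({a, b, c} : Finset α) ⊆ Y₀ ∧
        (∀ Y' ∈ ({UP ∩ UQ, UP ∩ VQ, VP ∩ UQ, VP ∩ VQ} : Finset (Finset α)),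
          ({a, b, c} : Finset α) ⊆ Y' → Y' = Y₀) ∧
        Conflict (Restrict F Y₀) (Restrict G Y₀) a b c) := by
    intro Y hY habcY
    refine ⟨Y, hY, habcY, ?_, conflict_restrict hconf habcY⟩
    intro Y' hY' habcY'
    exact huniq Y hY (habcY (by simp)) Y' hY' (habcY' (by simp))
  have hsubCD : ({a, b, c} : Finset α) ⊆ C ∩ D := Finset.subset_inter hCsub hDsub
  rcases hCP with hP | hP <;> rcases hDQ with hQ | hQ
  · exact key (UP ∩ UQ) (by simp) (hsubCD.trans (Finset.inter_subset_inter hP hQ))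
  · exact key (UP ∩ VQ) (by simp) (hsubCD.trans (Finset.inter_subset_inter hP hQ))
  · exact key (VP ∩ UQ) (by simp) (hsubCD.trans (Finset.inter_subset_inter hP hQ))
  · exact key (VP ∩ VQ) (by simp) (hsubCD.trans (Finset.inter_subset_inter hP hQ))
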